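/- Let P, Q be orthogonal projections on a complex Hilbert space 𝔥 whose ranges 𝔭 = P𝔥 and 𝔮 = Q𝔥 are in generic position (i.e. 𝔭∩𝔮 = 𝔭∩𝔮^⊥ = 𝔭^⊥∩𝔮 = 𝔭^⊥∩𝔮^⊥ = {0}). Then the set H_φ := {(q, q^⊥) ∈ 𝔮 × 𝔮^⊥ : P^⊥(q + q^⊥) = 0} is the graph of a linear, injective, closed map φ: 𝔮 → 𝔮^⊥ with dense domain Q𝔭 and dense image Q^⊥𝔭; in particular gra φ = {(Qp, Q^⊥p) : p ∈ 𝔭}. -/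

import Mathlib

open scoped ComplexInnerProductSpace

section Aux

variable {E : Type*} [NormedAddCommGroup E] [InnerProductSpace ℂ E] [CompleteSpace E]

lemma mem_range_iff_proj (P : E →L[ℂ] E) (hP : P ∘L P = P) (x : E) :
    x ∈ LinearMap.range (P : E →ₗ[ℂ] E) ↔ P x = x := by
  constructor
  · rintro ⟨y, rfl⟩
    have := ContinuousLinearMap.ext_iff.mp hP y
    simpa using this
  · intro h; exact ⟨x, h⟩

lemma orth_range_eq_ker (Q : E →L[ℂ] E) (hsa : IsSelfAdjoint Q) :
    (LinearMap.range (Q : E →ₗ[ℂ] E))ᗮ = LinearMap.ker (Q : E →ₗ[ℂ] E) := by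
  have hsym : ∀ x y : E, ⟪Q x, y⟫ = ⟪x, Q y⟫ := fun x y => hsa.isSymmetric x y
  ext y
  rw [Submodule.mem_orthogonal, LinearMap.mem_ker]
  constructor
  · intro h
    have h1 : ⟪Q y, Q y⟫ = 0 := by
      have := h (Q (Q y)) ⟨Q y, rfl⟩
      rwa [hsym] at this
    simpa [inner_self_eq_zero] using h1
  · rintro h u ⟨v, rfl⟩
    rw [ContinuousLinearMap.coe_coe] at h ⊢
    rw [hsym, h, inner_zero_right]

end Aux

theorem graph_phi
    {E : Type*} [NormedAddCommGroup E] [InnerProductSpace ℂ E] [CompleteSpace E]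
    (P : E →L[ℂ] E) (hP_proj : P ∘L P = P) (hP_sa : IsSelfAdjoint P)
    (Q : E →L[ℂ] E) (hQ_proj : Q ∘L Q = Q) (hQ_sa : IsSelfAdjoint Q)
    (hgen1 : LinearMap.range (P : E →ₗ[ℂ] E) ⊓ LinearMap.range (Q : E →ₗ[ℂ] E) = ⊥)
    (hgen2 : LinearMap.range (P : E →ₗ[ℂ] E) ⊓ (LinearMap.range (Q : E →ₗ[ℂ] E))ᗮ = ⊥)
    (hgen3 : (LinearMap.range (P : E →ₗ[ℂ] E))ᗮ ⊓ LinearMap.range (Q : E →ₗ[ℂ] E) = ⊥)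
    (hgen4 : (LinearMap.range (P : E →ₗ[ℂ] E))ᗮ ⊓ (LinearMap.range (Q : E →ₗ[ℂ] E))ᗮ = ⊥)
    (Hφ : Set (E × E))
    (hHφ : Hφ = {z : E × E | z.1 ∈ LinearMap.range (Q : E →ₗ[ℂ] E) ∧ z.2 ∈ (LinearMap.range (Q : E →ₗ[ℂ] E))ᗮ ∧
      (1 - P) (z.1 + z.2) = 0}) :
    -- parametrization of the graph by 𝔭
    Hφ = {z : E × E | ∃ p ∈ LinearMap.range (P : E →ₗ[ℂ] E), z = (Q p, (1 - Q) p)} ∧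
    -- `Hφ` is the graph of a (single-valued) map
    (∀ z ∈ Hφ, ∀ w ∈ Hφ, z.1 = w.1 → z.2 = w.2) ∧
    -- this map is injective
    (∀ z ∈ Hφ, ∀ w ∈ Hφ, z.2 = w.2 → z.1 = w.1) ∧
    -- the map is closed (its graph is a closed set)
    IsClosed Hφ ∧
    -- dense domain in 𝔮
    closure (Prod.fst '' Hφ) = (LinearMap.range (Q : E →ₗ[ℂ] E) : Set E) ∧
    -- dense image in 𝔮ᗮ
    closure (Prod.snd '' Hφ) = ((LinearMap.range (Q : E →ₗ[ℂ] E))ᗮ : Set E) := by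
  have hker : (LinearMap.range (Q : E →ₗ[ℂ] E))ᗮ = LinearMap.ker (Q : E →ₗ[ℂ] E) := orth_range_eq_ker Q hQ_sa
  have hQQ : ∀ x, Q (Q x) = Q x := fun x => by
    have := ContinuousLinearMap.ext_iff.mp hQ_proj x; simpa using this
  have hPP : ∀ x, P (P x) = P x := fun x => by
    have := ContinuousLinearMap.ext_iff.mp hP_proj x; simpa using this
  have hsymQ : ∀ x y : E, ⟪Q x, y⟫ = ⟪x, Q y⟫ := fun x y => hQ_sa.isSymmetric x y
  -- parametrization
  have hparam : Hφ = {z : E × E | ∃ p ∈ LinearMap.range (P : E →ₗ[ℂ] E), z = (Q p, (1 - Q) p)} := by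
    rw [hHφ]
    ext z
    simp only [Set.mem_setOf_eq]
    constructor
    · rintro ⟨h1, h2, h3⟩
      have hz1 : Q z.1 = z.1 := (mem_range_iff_proj Q hQ_proj z.1).mp h1
      have hz2 : Q z.2 = 0 := by rw [hker, LinearMap.mem_ker] at h2; exact h2
      refine ⟨z.1 + z.2, ?_, ?_⟩
      · rw [mem_range_iff_proj P hP_proj]
        have h3' : (z.1 + z.2) - P (z.1 + z.2) = 0 := by simpa using h3
        exact (sub_eq_zero.mp h3').symm
      · have hq : Q (z.1 + z.2) = z.1 := by rw [map_add, hz1, hz2, add_zero]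
        have : (1 - Q) (z.1 + z.2) = z.2 := by
          simp only [ContinuousLinearMap.sub_apply, ContinuousLinearMap.one_apply, hq]
          abel
        rw [hq, this]
    · rintro ⟨p, hp, rfl⟩
      have hPp : P p = p := (mem_range_iff_proj P hP_proj p).mp hp
      refine ⟨⟨p, rfl⟩, ?_, ?_⟩
      · rw [hker, LinearMap.mem_ker]
        simp [hQQ]
      · have : Q p + (1 - Q) p = p := by
          simp only [ContinuousLinearMap.sub_apply, ContinuousLinearMap.one_apply]; abel
        rw [this]
        simp [hPp]
  refine ⟨hparam, ?_, ?_, ?_, ?_, ?_⟩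
  -- single-valued
  · intro z hz w hw h1
    rw [hHφ] at hz hw
    obtain ⟨_, hz2, hz3⟩ := hz
    obtain ⟨_, hw2, hw3⟩ := hw
    have hd : z.2 - w.2 ∈ (LinearMap.range (Q : E →ₗ[ℂ] E))ᗮ := Submodule.sub_mem _ hz2 hw2
    have hdP : z.2 - w.2 ∈ LinearMap.range (P : E →ₗ[ℂ] E) := by
      rw [mem_range_iff_proj P hP_proj]
      have : (1 - P) (z.2 - w.2) = 0 := by
        have : (1 - P) ((z.1 + z.2) - (w.1 + w.2)) = 0 := by rw [map_sub, hz3, hw3, sub_zero]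
        rw [h1] at this
        convert this using 2
        abel
      have h' : (z.2 - w.2) - P (z.2 - w.2) = 0 := by simpa using this
      exact (sub_eq_zero.mp h').symm
    have : z.2 - w.2 ∈ LinearMap.range (P : E →ₗ[ℂ] E) ⊓ (LinearMap.range (Q : E →ₗ[ℂ] E))ᗮ := ⟨hdP, hd⟩
    rw [hgen2] at this
    have := (Submodule.mem_bot ℂ).mp this
    exact sub_eq_zero.mp this
  -- injective
  · intro z hz w hw h2
    rw [hHφ] at hz hw
    obtain ⟨hz1, _, hz3⟩ := hz
    obtain ⟨hw1, _, hw3⟩ := hw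
    have hd : z.1 - w.1 ∈ LinearMap.range (Q : E →ₗ[ℂ] E) := Submodule.sub_mem _ hz1 hw1
    have hdP : z.1 - w.1 ∈ LinearMap.range (P : E →ₗ[ℂ] E) := by
      rw [mem_range_iff_proj P hP_proj]
      have : (1 - P) (z.1 - w.1) = 0 := by
        have : (1 - P) ((z.1 + z.2) - (w.1 + w.2)) = 0 := by rw [map_sub, hz3, hw3, sub_zero]
        rw [h2] at this
        convert this using 2
        abel
      have h' : (z.1 - w.1) - P (z.1 - w.1) = 0 := by simpa using this
      exact (sub_eq_zero.mp h').symm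
    have : z.1 - w.1 ∈ LinearMap.range (P : E →ₗ[ℂ] E) ⊓ LinearMap.range (Q : E →ₗ[ℂ] E) := ⟨hdP, hd⟩
    rw [hgen1] at this
    have := (Submodule.mem_bot ℂ).mp this
    exact sub_eq_zero.mp this
  -- closed
  · have hset : Hφ = {z : E × E | Q z.1 = z.1} ∩ {z : E × E | Q z.2 = 0} ∩
        {z : E × E | (1 - P) (z.1 + z.2) = 0} := by
      rw [hHφ]
      ext z
      simp only [Set.mem_setOf_eq, Set.mem_inter_iff, mem_range_iff_proj Q hQ_proj,
        hker, LinearMap.mem_ker, ContinuousLinearMap.coe_coe]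
      tauto
    rw [hset]
    refine IsClosed.inter (IsClosed.inter ?_ ?_) ?_
    · exact isClosed_eq (Q.continuous.comp continuous_fst) continuous_fst
    · exact isClosed_eq (Q.continuous.comp continuous_snd) continuous_const
    · exact isClosed_eq ((1 - P).continuous.comp (continuous_fst.add continuous_snd))
        continuous_const
  -- dense domain
  · have hclosedQ : IsClosed ((LinearMap.range (Q : E →ₗ[ℂ] E) : Submodule ℂ E) : Set E) := by
      have : ((LinearMap.range (Q : E →ₗ[ℂ] E) : Submodule ℂ E) : Set E) = {x : E | Q x = x} := by
        ext x; exact mem_range_iff_proj Q hQ_proj x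
      rw [this]
      exact isClosed_eq Q.continuous continuous_id
    set S : Submodule ℂ E := (LinearMap.range (P : E →ₗ[ℂ] E)).map (Q : E →ₗ[ℂ] E) with hS
    have himg : Prod.fst '' Hφ = (S : Set E) := by
      rw [hparam]
      ext x
      simp only [Set.mem_image, Set.mem_setOf_eq, hS, SetLike.mem_coe, Submodule.mem_map,
        ContinuousLinearMap.coe_coe]
      constructor
      · rintro ⟨z, ⟨p, hp, rfl⟩, rfl⟩
        exact ⟨p, hp, rfl⟩
      · rintro ⟨p, hp, rfl⟩
        exact ⟨(Q p, (1 - Q) p), ⟨p, hp, rfl⟩, rfl⟩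
    have hSorth : Sᗮ = (LinearMap.range (Q : E →ₗ[ℂ] E))ᗮ := by
      apply le_antisymm
      · intro x hx
        have hx' := (Submodule.mem_orthogonal S x).mp hx
        rw [hker, LinearMap.mem_ker]
        have hQx : Q x ∈ (LinearMap.range (P : E →ₗ[ℂ] E))ᗮ := by
          rw [Submodule.mem_orthogonal]
          rintro u ⟨v, rfl⟩
          have := hx' (Q (P v)) ⟨P v, ⟨v, rfl⟩, rfl⟩
          rwa [hsymQ] at this
        have hmem : Q x ∈ (LinearMap.range (P : E →ₗ[ℂ] E))ᗮ ⊓ LinearMap.range (Q : E →ₗ[ℂ] E) := ⟨hQx, ⟨x, rfl⟩⟩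
        rw [hgen3] at hmem
        exact (Submodule.mem_bot ℂ).mp hmem
      · apply Submodule.orthogonal_le
        rintro y ⟨p, hp, rfl⟩
        exact ⟨p, rfl⟩
    calc closure (Prod.fst '' Hφ) = closure (S : Set E) := by rw [himg]
      _ = (S.topologicalClosure : Set E) := (Submodule.topologicalClosure_coe S).symm
      _ = ((Sᗮᗮ : Submodule ℂ E) : Set E) := by rw [Submodule.orthogonal_orthogonal_eq_closure]
      _ = (((LinearMap.range (Q : E →ₗ[ℂ] E))ᗮᗮ : Submodule ℂ E) : Set E) := by rw [hSorth]
      _ = ((LinearMap.range (Q : E →ₗ[ℂ] E)).topologicalClosure : Set E) := by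
          rw [Submodule.orthogonal_orthogonal_eq_closure]
      _ = (LinearMap.range (Q : E →ₗ[ℂ] E) : Set E) := by
          rw [Submodule.topologicalClosure_coe]
          exact hclosedQ.closure_eq
  -- dense image
  · set T : Submodule ℂ E := (LinearMap.range (P : E →ₗ[ℂ] E)).map ((1 - Q : E →L[ℂ] E) : E →ₗ[ℂ] E) with hT
    have himg : Prod.snd '' Hφ = (T : Set E) := by
      rw [hparam]
      ext x
      simp only [Set.mem_image, Set.mem_setOf_eq, hT, SetLike.mem_coe, Submodule.mem_map,
        ContinuousLinearMap.coe_coe]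
      constructor
      · rintro ⟨z, ⟨p, hp, rfl⟩, rfl⟩
        exact ⟨p, hp, rfl⟩
      · rintro ⟨p, hp, rfl⟩
        exact ⟨(Q p, (1 - Q) p), ⟨p, hp, rfl⟩, rfl⟩
    have hsymQ' : ∀ x y : E, ⟪(1 - Q) x, y⟫ = ⟪x, (1 - Q) y⟫ := by
      intro x y
      simp only [ContinuousLinearMap.sub_apply, ContinuousLinearMap.one_apply,
        inner_sub_left, inner_sub_right, hsymQ]
    have hTorth : Tᗮ = LinearMap.range (Q : E →ₗ[ℂ] E) := by
      apply le_antisymm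
      · intro x hx
        have hx' := (Submodule.mem_orthogonal T x).mp hx
        have hQx : (1 - Q) x ∈ (LinearMap.range (P : E →ₗ[ℂ] E))ᗮ := by
          rw [Submodule.mem_orthogonal]
          rintro u ⟨v, rfl⟩
          have := hx' ((1 - Q) (P v)) ⟨P v, ⟨v, rfl⟩, rfl⟩
          rwa [hsymQ'] at this
        have hQx2 : (1 - Q) x ∈ (LinearMap.range (Q : E →ₗ[ℂ] E))ᗮ := by
          rw [hker, LinearMap.mem_ker]
          simp [hQQ]
        have hmem : (1 - Q) x ∈ (LinearMap.range (P : E →ₗ[ℂ] E))ᗮ ⊓ (LinearMap.range (Q : E →ₗ[ℂ] E))ᗮ := ⟨hQx, hQx2⟩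
        rw [hgen4] at hmem
        have h0 := (Submodule.mem_bot ℂ).mp hmem
        have : x = Q x := by
          have : x - Q x = 0 := by simpa using h0
          exact (sub_eq_zero.mp this)
        exact ⟨x, this.symm⟩
      · rintro y ⟨u, rfl⟩
        rw [Submodule.mem_orthogonal]
        rintro t ⟨p, hp, rfl⟩
        simp only [ContinuousLinearMap.coe_coe]
        rw [hsymQ']
        have : (1 - Q) (Q u) = 0 := by simp [hQQ]
        rw [this, inner_zero_right]
    calc closure (Prod.snd '' Hφ) = closure (T : Set E) := by rw [himg]
      _ = (T.topologicalClosure : Set E) := (Submodule.topologicalClosure_coe T).symm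
      _ = ((Tᗮᗮ : Submodule ℂ E) : Set E) := by rw [Submodule.orthogonal_orthogonal_eq_closure]
      _ = ((LinearMap.range (Q : E →ₗ[ℂ] E))ᗮ : Set E) := by rw [hTorth]
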